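/- Let G be a finite graph, G_X and G_Y subgraphs with G = G_X ∪ G_Y, such that for every connected component U of G_X, the intersection of the component G_X[U] with G_Y is connected. If B_X and B_Y generate the cycle spaces of G_X and G_Y respectively, then B_X ∪ B_Y generates the cycle space of G; in particular bn(G) ≤ bn(G_X) + bn(G_Y). -/

import Mathlib

variable {V : Type*} [Fintype V] [DecidableEq V]

/-- An F2-cycle relative to an edge set `E`: a finite set of edges, all belonging to `E`,
in which every vertex has even degree. -/
def IsF2CycleIn (E : Set (Sym2 V)) (C : Finset (Sym2 V)) : Prop :=
  (∀ e ∈ C, e ∈ E) ∧ ∀ v : V, Even ((C.filter (fun e => v ∈ e)).card)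

/-- `B` generates the cycle space of the graph with edge set `E`: every F2-cycle is a
symmetric difference of a subfamily of `B`. -/
def GeneratesIn (E : Set (Sym2 V)) (B : List (Finset (Sym2 V))) : Prop :=
  ∀ C : Finset (Sym2 V), IsF2CycleIn E C →
    ∃ l : List (Finset (Sym2 V)), l.Sublist B ∧ C = l.foldr symmDiff ∅

/-- The basis number of the graph with edge set `E`: the least `k` such that some
family of F2-cycles generating the cycle space uses each edge at most `k` times. -/
noncomputable def bnSet (E : Set (Sym2 V)) : ℕ :=
  sInf {k | ∃ B : List (Finset (Sym2 V)), (∀ X ∈ B, IsF2CycleIn E X) ∧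
    GeneratesIn E B ∧ ∀ e : Sym2 V, B.countP (fun X => decide (e ∈ X)) ≤ k}

/-- The basis number of a graph. -/
noncomputable def SimpleGraph.bn (G : SimpleGraph V) : ℕ := bnSet G.edgeSet
/-- `U` is (the vertex set of) a connected component of the subgraph `H`:
`U` induces a connected subgraph and is maximal with this property. -/
def SimpleGraph.Subgraph.IsCompOf {G : SimpleGraph V} (H : G.Subgraph) (U : Set V) : Prop :=
  (H.induce U).Connected ∧ U ⊆ H.verts ∧
    ∀ U' : Set V, U ⊆ U' → U' ⊆ H.verts → (H.induce U').Connected → U' = U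

attribute [local instance 10] Classical.propDecidable

open scoped symmDiff

set_option linter.unusedSectionVars false

private def dZ (v : V) (C : Finset (Sym2 V)) : ZMod 2 := ((C.filter fun e => v ∈ e).card : ZMod 2)

private def cZ (v : V) (L : List (Sym2 V)) : ZMod 2 := (L.countP (fun e => decide (v ∈ e)) : ZMod 2)

private def red (L : List (Sym2 V)) : Finset (Sym2 V) := L.foldr (fun e s => symmDiff {e} s) ∅

private lemma zmod2_cases : ∀ x : ZMod 2, x = 0 ∨ x = 1 := by decide

private lemma cardSymmDiff (A B : Finset (Sym2 V)) :
    (((A ∆ B).card : ZMod 2)) = (A.card : ZMod 2) + B.card := by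
  have h1 : A ∆ B = (A ∪ B) \ (A ∩ B) := by
    ext e; simp [Finset.mem_symmDiff]; tauto
  have h2 : (A ∩ B) ⊆ A ∪ B := Finset.inter_subset_left.trans Finset.subset_union_left
  have h3 : (A ∆ B).card + (A ∩ B).card = (A ∪ B).card := by
    rw [h1]; exact Finset.card_sdiff_add_card_eq_card h2
  have h4 : (A ∪ B).card + (A ∩ B).card = A.card + B.card :=
    Finset.card_union_add_card_inter A B
  have h5 : (A ∆ B).card + 2 * (A ∩ B).card = A.card + B.card := by omega
  have := congrArg (Nat.cast : ℕ → ZMod 2) h5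
  push_cast at this
  have h2z : (2 : ZMod 2) = 0 := by decide
  rw [h2z] at this
  simpa using this

private lemma dZ_symmDiff (v : V) (A B : Finset (Sym2 V)) :
    dZ v (A ∆ B) = dZ v A + dZ v B := by
  have h : (A ∆ B).filter (fun e => v ∈ e) = (A.filter fun e => v ∈ e) ∆ (B.filter fun e => v ∈ e) := by
    ext e; simp [Finset.mem_symmDiff, Finset.mem_filter]; tauto
  unfold dZ
  rw [h, cardSymmDiff]

private lemma dZ_singleton (v : V) (e : Sym2 V) :
    dZ v ({e} : Finset (Sym2 V)) = if v ∈ e then 1 else 0 := by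
  unfold dZ
  rw [Finset.filter_singleton]
  split <;> simp

private lemma dZ_red (v : V) (L : List (Sym2 V)) : dZ v (red L) = cZ v L := by
  induction L with
  | nil => simp [dZ, cZ, red]
  | cons e L ih =>
    show dZ v ({e} ∆ red L) = cZ v (e :: L)
    rw [dZ_symmDiff, dZ_singleton, ih]
    unfold cZ
    rw [List.countP_cons]
    push_cast
    by_cases h : v ∈ e <;> simp [h, add_comm]

private lemma mem_red {L : List (Sym2 V)} {e : Sym2 V} (h : e ∈ red L) : e ∈ L := by
  induction L with
  | nil => simpa [red] using h
  | cons a L ih =>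
    have h' : e ∈ ({a} : Finset (Sym2 V)) ∆ red L := h
    rw [Finset.mem_symmDiff] at h'
    rcases h' with ⟨h1, _⟩ | ⟨h1, _⟩
    · simp at h1; simp [h1]
    · simp [ih h1]

private lemma red_append (L1 L2 : List (Sym2 V)) : red (L1 ++ L2) = red L1 ∆ red L2 := by
  induction L1 with
  | nil => show red L2 = ∅ ∆ red L2; rw [← Finset.bot_eq_empty, bot_symmDiff]
  | cons a L1 ih =>
    show {a} ∆ red (L1 ++ L2) = ({a} ∆ red L1) ∆ red L2
    rw [ih, symmDiff_assoc]

private lemma foldr_symmDiff_shift (l : List (Finset (Sym2 V))) (b : Finset (Sym2 V)) :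
    l.foldr symmDiff b = (l.foldr symmDiff ∅) ∆ b := by
  induction l with
  | nil => show b = ∅ ∆ b; rw [← Finset.bot_eq_empty, bot_symmDiff]
  | cons a l ih =>
    show a ∆ l.foldr symmDiff b = (a ∆ l.foldr symmDiff ∅) ∆ b
    rw [ih, symmDiff_assoc]

private lemma even_iff_dZ (v : V) (C : Finset (Sym2 V)) :
    Even ((C.filter fun e => v ∈ e).card) ↔ dZ v C = 0 := by
  unfold dZ
  rw [ZMod.natCast_eq_zero_iff]
  exact ⟨fun h => h.two_dvd, fun h => (even_iff_two_dvd).mpr h⟩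

open SimpleGraph

private lemma vert_of_edge {G : SimpleGraph V} (H : G.Subgraph) {e : Sym2 V} {v : V}
    (he : e ∈ H.edgeSet) (hv : v ∈ e) : v ∈ H.verts := by
  induction e with
  | _ a b =>
    rw [Subgraph.mem_edgeSet] at he
    rcases Sym2.mem_iff.mp hv with rfl | rfl
    · exact he.fst_mem
    · exact he.snd_mem

private lemma edge_inf_sub {G : SimpleGraph V} (GX GY : G.Subgraph) (U : Set V) {e : Sym2 V}
    (he : e ∈ ((GX.induce U) ⊓ GY).edgeSet) : e ∈ GX.edgeSet ∧ e ∈ GY.edgeSet := by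
  induction e with
  | _ a b =>
    rw [Subgraph.mem_edgeSet, Subgraph.inf_adj, Subgraph.induce_adj] at he
    exact ⟨Subgraph.mem_edgeSet.mpr he.1.2.2, Subgraph.mem_edgeSet.mpr he.2⟩

private lemma verts_of_walk {G : SimpleGraph V} (H : G.Subgraph) :
    ∀ {v w : V}, H.spanningCoe.Walk v w → v ∈ H.verts → w ∈ H.verts := by
  intro v w p
  induction p with
  | nil => exact id
  | cons h' p ih =>
    intro _
    rw [Subgraph.spanningCoe_adj] at h'
    exact ih h'.snd_mem

private lemma isCompOf_reach {G : SimpleGraph V} (H : G.Subgraph) {v : V} (hv : v ∈ H.verts) :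
    H.IsCompOf {w | H.spanningCoe.Reachable v w} := by
  set U : Set V := {w | H.spanningCoe.Reachable v w} with hU
  have hvU : v ∈ U := Reachable.refl v
  have hUverts : U ⊆ H.verts := fun w hw => hw.elim fun p => verts_of_walk H p hv
  have key : ∀ {a b : V} (_ : H.spanningCoe.Walk a b) (ha : a ∈ U) (hb : b ∈ U),
      (H.induce U).coe.Reachable ⟨a, ha⟩ ⟨b, hb⟩ := by
    intro a b p
    induction p with
    | nil => intro ha hb; exact Reachable.refl _
    | @cons a c b h' q ih =>
      intro ha hb
      have hc : c ∈ U := ha.trans h'.reachable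
      have hadj : (H.induce U).coe.Adj ⟨a, ha⟩ ⟨c, hc⟩ := by
        rw [Subgraph.spanningCoe_adj] at h'
        simp only [Subgraph.coe_adj, Subgraph.induce_adj]
        exact ⟨ha, hc, h'⟩
      exact hadj.reachable.trans (ih hc hb)
  refine ⟨?_, hUverts, ?_⟩
  · constructor
    haveI : Nonempty ((H.induce U).verts) := ⟨⟨v, hvU⟩⟩
    refine SimpleGraph.Connected.mk ?_
    rintro ⟨x, hx⟩ ⟨y, hy⟩
    have hx' : H.spanningCoe.Reachable v x := hx
    have hy' : H.spanningCoe.Reachable v y := hy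
    obtain ⟨px⟩ := hx'
    obtain ⟨py⟩ := hy'
    exact (key px hvU hx).symm.trans (key py hvU hy)
  · intro U' hUU' hU'v hconn
    refine Set.Subset.antisymm ?_ hUU'
    intro w hw
    have hvU' : v ∈ U' := hUU' hvU
    have hreach : (H.induce U').coe.Reachable ⟨v, hvU'⟩ ⟨w, hw⟩ := hconn.coe ⟨v, hvU'⟩ ⟨w, hw⟩
    let f : (H.induce U').coe →g H.spanningCoe :=
      ⟨fun x => (x : V), fun {x y} hxy => by
        simp only [Subgraph.coe_adj, Subgraph.induce_adj] at hxy
        rw [Subgraph.spanningCoe_adj]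
        exact hxy.2.2⟩
    exact hreach.map f

private lemma walk_edge_list {G : SimpleGraph V} (H : G.Subgraph) {a b : H.verts}
    (w : H.coe.Walk a b) :
    ∃ L : List (Sym2 V), (∀ e ∈ L, e ∈ H.edgeSet) ∧
      ∀ u : V, cZ u L = (if u = (a : V) then 1 else 0) + (if u = (b : V) then 1 else 0) := by
  induction w with
  | @nil a =>
    refine ⟨[], by simp, fun u => ?_⟩
    rcases eq_or_ne u (a : V) with rfl | h
    · simp [cZ]
      decide
    · simp [cZ, h]
  | @cons a c b h p ih =>
    obtain ⟨L, hL1, hL2⟩ := ih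
    have hadj : H.Adj (a : V) (c : V) := by rwa [Subgraph.coe_adj] at h
    have hac : (a : V) ≠ (c : V) := hadj.adj_sub.ne
    refine ⟨s((a : V), (c : V)) :: L, ?_, ?_⟩
    · intro e he
      rcases List.mem_cons.mp he with rfl | he
      · exact Subgraph.mem_edgeSet.mpr hadj
      · exact hL1 e he
    · intro u
      have hcnt : cZ u (s((a : V), (c : V)) :: L)
          = (if u ∈ s((a : V), (c : V)) then 1 else 0) + cZ u L := by
        unfold cZ
        rw [List.countP_cons]
        push_cast
        by_cases hm : u ∈ s((a : V), (c : V)) <;> simp [hm, add_comm]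
      rw [hcnt, hL2 u]
      have h11 : (1 + 1 : ZMod 2) = 0 := by decide
      have hmem : (u ∈ s((a : V), (c : V))) ↔ (u = (a : V) ∨ u = (c : V)) := Sym2.mem_iff
      generalize (if u = (b : V) then (1 : ZMod 2) else 0) = t
      rcases eq_or_ne u (a : V) with hua | hua <;> rcases eq_or_ne u (c : V) with huc | huc
      · exact absurd (hua.symm.trans huc) hac
      · rw [if_pos (hmem.mpr (Or.inl hua)), if_pos hua, if_neg huc]; try simp
      · rw [if_pos (hmem.mpr (Or.inr huc)), if_pos huc, if_neg hua, ← add_assoc, h11]; try simp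
      · rw [if_neg (fun hm => (hmem.mp hm).elim hua huc), if_neg hua, if_neg huc]; try simp

private lemma comp_even {G : SimpleGraph V} (GX : G.Subgraph) (A : Finset (Sym2 V))
    (hA : ∀ e ∈ A, e ∈ GX.edgeSet) (z : V) :
    (((Finset.univ.filter fun w => dZ w A = 1 ∧ GX.spanningCoe.Reachable z w).card : ℕ) :
      ZMod 2) = 0 := by
  set Az : Finset (Sym2 V) := A.filter (fun e => ∀ x ∈ e, GX.spanningCoe.Reachable z x) with hAz
  have hedge : ∀ e ∈ A, ∀ w, w ∈ e → GX.spanningCoe.Reachable z w → e ∈ Az := by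
    intro e he w hwe hwU
    rw [hAz, Finset.mem_filter]
    refine ⟨he, ?_⟩
    have hG := hA e he
    induction e with
    | _ a b =>
      rw [Subgraph.mem_edgeSet] at hG
      have hab : GX.spanningCoe.Adj a b := by rw [Subgraph.spanningCoe_adj]; exact hG
      intro x hx
      rcases Sym2.mem_iff.mp hx with rfl | rfl <;> rcases Sym2.mem_iff.mp hwe with rfl | rfl
      · exact hwU
      · exact hwU.trans hab.symm.reachable
      · exact hwU.trans hab.reachable
      · exact hwU
  have hstep : ∀ w : V, dZ w Az
      = if (dZ w A = 1 ∧ GX.spanningCoe.Reachable z w) then 1 else 0 := by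
    intro w
    by_cases hwU : GX.spanningCoe.Reachable z w
    · have hfil : Az.filter (fun e => w ∈ e) = A.filter (fun e => w ∈ e) := by
        apply Finset.Subset.antisymm
        · exact Finset.filter_subset_filter _ (Finset.filter_subset _ _)
        · intro e he
          rw [Finset.mem_filter] at he ⊢
          exact ⟨hedge e he.1 w he.2 hwU, he.2⟩
      have hdZ : dZ w Az = dZ w A := by unfold dZ; rw [hfil]
      rcases zmod2_cases (dZ w A) with h0 | h1
      · have hne : ¬ (dZ w A = 1 ∧ GX.spanningCoe.Reachable z w) := by
          rintro ⟨h1, -⟩; rw [h0] at h1; exact absurd h1 (by decide)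
        rw [if_neg hne, hdZ]; exact h0
      · rw [if_pos ⟨h1, hwU⟩, hdZ, h1]
    · have hfil : Az.filter (fun e => w ∈ e) = ∅ := by
        rw [Finset.eq_empty_iff_forall_notMem]
        intro e he
        rw [Finset.mem_filter] at he
        have h2 := (Finset.mem_filter.mp he.1).2
        exact hwU (h2 w he.2)
      have hdZ : dZ w Az = 0 := by unfold dZ; rw [hfil]; simp
      rw [hdZ, if_neg]; rintro ⟨-, h⟩; exact hwU h
  have h2each : ∀ e ∈ Az, (Finset.univ.filter fun w : V => w ∈ e).card = 2 := by
    intro e he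
    have heG : e ∈ GX.edgeSet := hA e (Finset.mem_of_mem_filter e he)
    have hnd : ¬ e.IsDiag := G.not_isDiag_of_mem_edgeSet (GX.edgeSet_subset heG)
    induction e with
    | _ a b =>
      have hab : a ≠ b := fun h => hnd (by rw [h]; exact Sym2.mk_isDiag_iff.mpr rfl)
      have hset : (Finset.univ.filter fun w : V => w ∈ s(a, b)) = {a, b} := by
        ext x; simp [Sym2.mem_iff]
      rw [hset, Finset.card_pair hab]
  have hsum0 : ∑ w : V, dZ w Az = 0 := by
    have hswap : (∑ w : V, (Az.filter fun e => w ∈ e).card)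
        = ∑ e ∈ Az, (Finset.univ.filter fun w : V => w ∈ e).card := by
      simp only [Finset.card_filter]
      rw [Finset.sum_comm]
    have : (∑ w : V, (Az.filter fun e => w ∈ e).card) = ∑ e ∈ Az, 2 := by
      rw [hswap]; exact Finset.sum_congr rfl h2each
    unfold dZ
    rw [← Nat.cast_sum, this]
    push_cast
    simp
    right
    decide
  calc (((Finset.univ.filter fun w => dZ w A = 1 ∧ GX.spanningCoe.Reachable z w).card : ℕ) :
      ZMod 2) = ∑ w : V, dZ w Az := by
        rw [Finset.card_filter, Nat.cast_sum]
        refine Finset.sum_congr rfl (fun w _ => ?_)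
        rw [hstep w]
        split <;> simp
    _ = 0 := hsum0

private lemma gen_key {G : SimpleGraph V} (GX GY : G.Subgraph)
    (hunion : GX ⊔ GY = ⊤)
    (hcomp : ∀ U : Set V, GX.IsCompOf U → ((GX.induce U) ⊓ GY).Connected)
    (BX BY : List (Finset (Sym2 V)))
    (hBX : GeneratesIn GX.edgeSet BX) (hBY : GeneratesIn GY.edgeSet BY) :
    GeneratesIn G.edgeSet (BX ++ BY) := by
  cases isEmpty_or_nonempty V with
  | inl hE =>
    haveI := hE
    intro C _
    refine ⟨[], List.nil_sublist _, ?_⟩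
    show C = ∅
    ext e
    induction e with
    | _ a b => exact isEmptyElim a
  | inr hNE =>
    intro C hC
    obtain ⟨hCE, hCeven⟩ := hC
    set A : Finset (Sym2 V) := C.filter (fun e => e ∈ GX.edgeSet) with hA
    have hAX : ∀ e ∈ A, e ∈ GX.edgeSet := fun e he => (Finset.mem_filter.mp he).2
    have hAC : A ⊆ C := Finset.filter_subset _ _
    have dC0 : ∀ u : V, dZ u C = 0 := fun u => (even_iff_dZ u C).mp (hCeven u)
    have hvert : ∀ v : V, dZ v A = 1 → v ∈ GX.verts ∧ v ∈ GY.verts := by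
      intro v hv
      constructor
      · have hne : (A.filter fun e => v ∈ e).Nonempty := by
          rw [Finset.nonempty_iff_ne_empty]
          intro h
          unfold dZ at hv
          rw [h] at hv
          simp at hv
        obtain ⟨e, he⟩ := hne
        rw [Finset.mem_filter] at he
        exact vert_of_edge GX (hAX e he.1) he.2
      · set A' : Finset (Sym2 V) := C.filter (fun e => ¬ e ∈ GX.edgeSet) with hA'
        have hsplit : dZ v A + dZ v A' = dZ v C := by
          unfold dZ
          rw [← Nat.cast_add]
          congr 1
          rw [hA, hA',
            Finset.filter_comm (p := fun e => e ∈ GX.edgeSet) (q := fun e => v ∈ e) C,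
            Finset.filter_comm (p := fun e => ¬ e ∈ GX.edgeSet) (q := fun e => v ∈ e) C]
          exact Finset.card_filter_add_card_filter_not (p := fun e => e ∈ GX.edgeSet)
        have hA'1 : dZ v A' = 1 := by
          rcases zmod2_cases (dZ v A') with h | h
          · rw [hv, h, dC0 v] at hsplit; exact absurd hsplit (by decide)
          · exact h
        have hne : (A'.filter fun e => v ∈ e).Nonempty := by
          rw [Finset.nonempty_iff_ne_empty]
          intro h
          unfold dZ at hA'1
          rw [h] at hA'1
          simp at hA'1
        obtain ⟨e, he⟩ := hne
        rw [Finset.mem_filter] at he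
        have heC := (Finset.mem_filter.mp he.1).1
        have heNX := (Finset.mem_filter.mp he.1).2
        have heG : e ∈ G.edgeSet := hCE e heC
        have hor : e ∈ GX.edgeSet ∪ GY.edgeSet := by
          rw [← Subgraph.edgeSet_sup, hunion, Subgraph.edgeSet_top]; exact heG
        rcases hor with h | h
        · exact absurd h heNX
        · exact vert_of_edge GY h he.2
    set S : Finset V := Finset.univ.filter (fun v => dZ v A = 1) with hS
    have hSmem : ∀ v, v ∈ S ↔ dZ v A = 1 := fun v => by simp [hS]
    let Uf : V → Set V := fun v => {w | GX.spanningCoe.Reachable v w}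
    let root : Set V → V := fun U =>
      if h : ((GX.induce U) ⊓ GY).verts.Nonempty then h.some else Classical.arbitrary V
    have hLex : ∀ v ∈ S, ∃ L : List (Sym2 V),
        (∀ e ∈ L, e ∈ GX.edgeSet ∧ e ∈ GY.edgeSet) ∧
        (root (Uf v) ∈ Uf v ∧ root (Uf v) ∈ GY.verts) ∧
        ∀ u : V, cZ u L = (if u = v then 1 else 0) + (if u = root (Uf v) then 1 else 0) := by
      intro v hvS
      obtain ⟨hvX, hvY⟩ := hvert v ((hSmem v).mp hvS)
      have hcompv : GX.IsCompOf (Uf v) := isCompOf_reach GX hvX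
      have hconn := hcomp (Uf v) hcompv
      have hvH : v ∈ ((GX.induce (Uf v)) ⊓ GY).verts := by
        rw [Subgraph.verts_inf, Subgraph.induce_verts]
        exact ⟨Reachable.refl v, hvY⟩
      have hne : ((GX.induce (Uf v)) ⊓ GY).verts.Nonempty := ⟨v, hvH⟩
      have hre : root (Uf v) = hne.some := dif_pos hne
      have hrootmem : root (Uf v) ∈ ((GX.induce (Uf v)) ⊓ GY).verts := by
        rw [hre]; exact hne.some_mem
      obtain ⟨p⟩ := hconn ⟨v, hvH⟩ ⟨root (Uf v), hrootmem⟩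
      obtain ⟨L, hL1, hL2⟩ := walk_edge_list _ p
      refine ⟨L, fun e he => edge_inf_sub GX GY (Uf v) (hL1 e he), ?_, hL2⟩
      have h := hrootmem
      rw [Subgraph.verts_inf, Subgraph.induce_verts] at h
      exact h
    choose! Lf hLf1 hLf2 hLf3 using hLex
    set bigL : List (Sym2 V) := S.toList.foldr (fun v acc => Lf v ++ acc) [] with hbigL
    have hmem_big : ∀ e ∈ bigL, ∃ v ∈ S, e ∈ Lf v := by
      have haux : ∀ (M : List V), ∀ e ∈ M.foldr (fun v acc => Lf v ++ acc) [],
          ∃ v ∈ M, e ∈ Lf v := by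
        intro M
        induction M with
        | nil => intro e he; simp at he
        | cons a M ih =>
          intro e he
          rcases List.mem_append.mp he with h | h
          · exact ⟨a, List.mem_cons_self, h⟩
          · obtain ⟨v, hv1, hv2⟩ := ih e h
            exact ⟨v, List.mem_cons_of_mem a hv1, hv2⟩
      intro e he
      rw [hbigL] at he
      obtain ⟨v, hv1, hv2⟩ := haux S.toList e he
      exact ⟨v, Finset.mem_toList.mp hv1, hv2⟩
    have hcZ_big : ∀ u : V, cZ u bigL = ∑ v ∈ S, cZ u (Lf v) := by
      intro u
      have haux : ∀ (M : List V), cZ u (M.foldr (fun v acc => Lf v ++ acc) [])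
          = (M.map fun v => cZ u (Lf v)).sum := by
        intro M
        induction M with
        | nil => simp [cZ]
        | cons a M ih =>
          show cZ u (Lf a ++ M.foldr _ []) = _
          unfold cZ at ih ⊢
          rw [List.countP_append, Nat.cast_add, ih]
          simp
      rw [hbigL, haux S.toList]
      exact Finset.sum_map_toList S _
    set T : Finset (Sym2 V) := red bigL with hT
    set CX : Finset (Sym2 V) := A ∆ T with hCX
    set CY : Finset (Sym2 V) := C ∆ CX with hCY
    have hTY : ∀ e ∈ T, e ∈ GX.edgeSet ∧ e ∈ GY.edgeSet := by
      intro e he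
      rw [hT] at he
      obtain ⟨v, hv, he2⟩ := hmem_big e (mem_red he)
      exact hLf1 v hv e he2
    have hCXedges : ∀ e ∈ CX, e ∈ GX.edgeSet := by
      intro e he
      rw [hCX, Finset.mem_symmDiff] at he
      rcases he with ⟨h1, _⟩ | ⟨h1, _⟩
      · exact hAX e h1
      · exact (hTY e h1).1
    have hdAS : ∀ u : V, dZ u A = if u ∈ S then 1 else 0 := by
      intro u
      by_cases hu : u ∈ S
      · rw [if_pos hu]; exact (hSmem u).mp hu
      · rw [if_neg hu]
        rcases zmod2_cases (dZ u A) with h | h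
        · exact h
        · exact absurd ((hSmem u).mpr h) hu
    have hCXeven : ∀ u : V, dZ u CX = 0 := by
      intro u
      rw [hCX, dZ_symmDiff, hT, dZ_red, hcZ_big]
      have hsum : ∑ v ∈ S, cZ u (Lf v)
          = (∑ v ∈ S, if u = v then (1 : ZMod 2) else 0)
            + ∑ v ∈ S, if u = root (Uf v) then (1 : ZMod 2) else 0 := by
        rw [← Finset.sum_add_distrib]
        exact Finset.sum_congr rfl fun v hv => hLf3 v hv u
      rw [hsum]
      have h1 : (∑ v ∈ S, if u = v then (1 : ZMod 2) else 0) = if u ∈ S then 1 else 0 := by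
        rw [Finset.sum_ite_eq]
      rw [h1, hdAS u]
      have hxx : ∀ x : ZMod 2, x + x = 0 := by decide
      rw [← add_assoc, hxx, zero_add]
      have hfil : ∑ v ∈ S, (if u = root (Uf v) then (1 : ZMod 2) else 0)
          = ((S.filter fun v => u = root (Uf v)).card : ZMod 2) := by
        rw [Finset.card_filter]
        push_cast
        rfl
      rw [hfil]
      rcases Finset.eq_empty_or_nonempty (S.filter fun v => u = root (Uf v)) with hemp | hne
      · rw [hemp]; simp
      · obtain ⟨w0, hw0⟩ := hne
        have hw0S : w0 ∈ S := (Finset.mem_filter.mp hw0).1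
        have hw0r : u = root (Uf w0) := (Finset.mem_filter.mp hw0).2
        have hu_mem : GX.spanningCoe.Reachable w0 u := by
          have h := (hLf2 w0 hw0S).1
          rw [← hw0r] at h
          exact h
        have hEqset : (S.filter fun v => u = root (Uf v))
            = Finset.univ.filter fun w => dZ w A = 1 ∧ GX.spanningCoe.Reachable w0 w := by
          ext v
          constructor
          · intro hv
            have hv1 : v ∈ S := (Finset.mem_filter.mp hv).1
            have hv2 : u = root (Uf v) := (Finset.mem_filter.mp hv).2
            refine Finset.mem_filter.mpr ⟨Finset.mem_univ v, (hSmem v).mp hv1, ?_⟩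
            have hru : GX.spanningCoe.Reachable v u := by
              have h := (hLf2 v hv1).1
              rwa [← hv2] at h
            exact hu_mem.trans hru.symm
          · intro hv
            have hv1 : dZ v A = 1 := (Finset.mem_filter.mp hv).2.1
            have hv2 : GX.spanningCoe.Reachable w0 v := (Finset.mem_filter.mp hv).2.2
            have hUeq : Uf v = Uf w0 := by
              ext x
              exact ⟨fun hx => hv2.trans hx, fun hx => hv2.symm.trans hx⟩
            refine Finset.mem_filter.mpr ⟨(hSmem v).mpr hv1, ?_⟩
            rw [hUeq]
            exact hw0r
        rw [hEqset]
        exact comp_even GX A hAX w0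
    have hCYeven : ∀ u : V, dZ u CY = 0 := by
      intro u
      rw [hCY, dZ_symmDiff, dC0 u, hCXeven u, add_zero]
    have hCYedges : ∀ e ∈ CY, e ∈ GY.edgeSet := by
      intro e he
      rw [hCY, Finset.mem_symmDiff] at he
      rcases he with ⟨h1, h2⟩ | ⟨h1, h2⟩
      · by_cases hY : e ∈ GY.edgeSet
        · exact hY
        have hX : e ∈ GX.edgeSet := by
          have hor : e ∈ GX.edgeSet ∪ GY.edgeSet := by
            rw [← Subgraph.edgeSet_sup, hunion, Subgraph.edgeSet_top]; exact hCE e h1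
          rcases hor with h | h
          · exact h
          · exact absurd h hY
        have heA : e ∈ A := by rw [hA, Finset.mem_filter]; exact ⟨h1, hX⟩
        have heT : e ∈ T := by
          by_contra hT'
          exact h2 (by rw [hCX, Finset.mem_symmDiff]; exact Or.inl ⟨heA, hT'⟩)
        exact absurd (hTY e heT).2 hY
      · rw [hCX, Finset.mem_symmDiff] at h1
        rcases h1 with ⟨hA1, _⟩ | ⟨hT1, _⟩
        · exact absurd (hAC hA1) h2
        · exact (hTY e hT1).2
    obtain ⟨lX, hlX1, hlX2⟩ := hBX CX
      ⟨hCXedges, fun v => (even_iff_dZ v CX).mpr (hCXeven v)⟩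
    obtain ⟨lY, hlY1, hlY2⟩ := hBY CY
      ⟨hCYedges, fun v => (even_iff_dZ v CY).mpr (hCYeven v)⟩
    refine ⟨lX ++ lY, hlX1.append hlY1, ?_⟩
    rw [List.foldr_append, foldr_symmDiff_shift, ← hlX2, ← hlY2, hCY,
      symmDiff_comm C CX, symmDiff_symmDiff_cancel_left]

private lemma bn_set_nonempty (E : Set (Sym2 V)) :
    {k | ∃ B : List (Finset (Sym2 V)), (∀ X ∈ B, IsF2CycleIn E X) ∧
      GeneratesIn E B ∧ ∀ e : Sym2 V, B.countP (fun X => decide (e ∈ X)) ≤ k}.Nonempty := by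
  set Ball : List (Finset (Sym2 V)) := (Finset.univ.filter fun X => IsF2CycleIn E X).toList
    with hBall
  refine ⟨Ball.length, Ball, ?_, ?_, fun e => List.countP_le_length⟩
  · intro X hX
    rw [hBall, Finset.mem_toList] at hX
    exact (Finset.mem_filter.mp hX).2
  · intro C hC
    refine ⟨[C], List.singleton_sublist.mpr ?_, ?_⟩
    · rw [hBall, Finset.mem_toList]
      exact Finset.mem_filter.mpr ⟨Finset.mem_univ C, hC⟩
    · show C = C ∆ ∅
      rw [← Finset.bot_eq_empty, symmDiff_bot]


/-- if `G = G_X ∪ G_Y` and for every connected component `U` of `G_X` the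
graph `G_X[U] ∩ G_Y` is connected, then generating sets of the cycle spaces of `G_X` and
`G_Y` together generate the cycle space of `G`; in particular `bn(G) ≤ bn(G_X) + bn(G_Y)`. -/
theorem generates_union_of_components (G : SimpleGraph V) (GX GY : G.Subgraph)
    (hunion : GX ⊔ GY = ⊤)
    (hcomp : ∀ U : Set V, GX.IsCompOf U → ((GX.induce U) ⊓ GY).Connected)
    (BX BY : List (Finset (Sym2 V)))
    (hBX : GeneratesIn GX.edgeSet BX) (hBY : GeneratesIn GY.edgeSet BY) :
    GeneratesIn G.edgeSet (BX ++ BY) ∧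
      G.bn ≤ bnSet GX.edgeSet + bnSet GY.edgeSet := by
  constructor
  · exact gen_key GX GY hunion hcomp BX BY hBX hBY
  · obtain ⟨B1, hB1c, hB1g, hB1k⟩ := Nat.sInf_mem (bn_set_nonempty GX.edgeSet)
    obtain ⟨B2, hB2c, hB2g, hB2k⟩ := Nat.sInf_mem (bn_set_nonempty GY.edgeSet)
    show bnSet G.edgeSet ≤ _
    unfold bnSet
    apply Nat.sInf_le
    rw [Set.mem_setOf_eq]
    refine ⟨B1 ++ B2, ?_, gen_key GX GY hunion hcomp B1 B2 hB1g hB2g, ?_⟩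
    · intro X hX
      rcases List.mem_append.mp hX with h | h
      · obtain ⟨h1, h2⟩ := hB1c X h
        exact ⟨fun e he => GX.edgeSet_subset (h1 e he), h2⟩
      · obtain ⟨h1, h2⟩ := hB2c X h
        exact ⟨fun e he => GY.edgeSet_subset (h1 e he), h2⟩
    · intro e
      rw [List.countP_append]
      exact add_le_add (hB1k e) (hB2k e)
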